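/- Let n > 1 be a real number and W : ℝ → ℝ be continuously differentiable on [1,∞) with W'(1) = 0 and with W' differentiable at 1 (write W''(1) for its derivative there), and suppose λ ↦ W'(λ)/(λⁿ − 1) is integrable on (1,∞). Define P̂(θ) = θ · ∫_{θ^{1/(n−1)}}^{∞} W'(λ)/(λⁿ − 1) dλ for θ > 1. Then the derivative of P̂ has a limit as θ → 1⁺, and lim_{θ→1⁺} P̂'(θ) = ∫₁^{∞} W'(λ)/(λⁿ − 1) dλ − W''(1)/(n(n−1)). -/

import Mathlib

open Real MeasureTheory Set Filter
open scoped Topology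

/-- The key identity in the proof of the cavitation-stability proposition:
the derivative of the dead load P̂, expressed in the outer-surface variable θ,
tends to P₀ − W''(1)/(n(n−1)) as θ → 1⁺. -/
theorem deriv_deadload_limit (n : ℝ) (hn : 1 < n) (W : ℝ → ℝ) (W'' : ℝ)
    (hW : ContDiffOn ℝ 1 W (Ici 1))
    (hW1 : deriv W 1 = 0)
    (hW2 : HasDerivAt (deriv W) W'' 1)
    (hInt : IntegrableOn (fun l => deriv W l / (l ^ n - 1)) (Ioi 1))
    (Phat : ℝ → ℝ)
    (hPhat : ∀ θ : ℝ, 1 < θ → Phat θ = θ *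
      ∫ l in Ioi (θ ^ (1 / (n - 1))), deriv W l / (l ^ n - 1)) :
    Tendsto (deriv Phat) (nhdsWithin 1 (Ioi 1))
      (nhds ((∫ l in Ioi (1 : ℝ), deriv W l / (l ^ n - 1)) - W'' / (n * (n - 1)))) := by
  set g : ℝ → ℝ := fun l => deriv W l / (l ^ n - 1) with hgdef
  have hn1 : (0:ℝ) < n - 1 := by linarith
  have hn0 : n ≠ 0 := by linarith
  have hn1' : n - 1 ≠ 0 := ne_of_gt hn1
  set q : ℝ → ℝ := fun θ => θ ^ (1 / (n - 1)) with hqdef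
  -- q maps Ioi 1 into Ioi 1
  have hq_mem : ∀ θ : ℝ, 1 < θ → 1 < q θ := by
    intro θ hθ
    exact (Real.one_lt_rpow_iff_of_pos (by linarith)).mpr
      (Or.inl ⟨hθ, by positivity⟩)
  -- rpow pow at points > 1 is > 1
  have hpow_gt : ∀ x : ℝ, 1 < x → 1 < x ^ n := by
    intro x hx
    exact (Real.one_lt_rpow_iff_of_pos (by linarith)).mpr (Or.inl ⟨hx, by linarith⟩)
  -- continuity of deriv W on Ioi 1
  have hdW_cont : ContinuousOn (deriv W) (Ioi 1) := by
    have h2 := hW.continuousOn_derivWithin (uniqueDiffOn_Ici 1) le_rfl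
    refine ContinuousOn.congr (h2.mono Ioi_subset_Ici_self) ?_
    intro x hx
    exact (derivWithin_of_mem_nhds (Ici_mem_nhds hx)).symm
  -- continuity of g on Ioi 1
  have hcontg : ContinuousOn g (Ioi 1) := by
    refine hdW_cont.div (ContinuousOn.sub ?_ continuousOn_const) ?_
    · exact fun x hx => (Real.continuousAt_rpow_const x n (Or.inr (by linarith))).continuousWithinAt
    · intro x hx
      have := hpow_gt x hx
      intro h
      rw [sub_eq_zero] at h
      exact absurd h.symm (ne_of_lt this)
  have hIoi_open : IsOpen (Ioi (1:ℝ)) := isOpen_Ioi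
  set I1 : ℝ := ∫ l in Ioi (1:ℝ), g l with hI1def
  set G : ℝ → ℝ := fun c => ∫ l in Ioc (1:ℝ) c, g l with hGdef
  -- splitting of the integral
  have hsplit : ∀ c : ℝ, 1 ≤ c → (∫ l in Ioi c, g l) = I1 - G c := by
    intro c hc
    have hu : Ioc 1 c ∪ Ioi c = Ioi 1 := Ioc_union_Ioi_eq_Ioi hc
    have h1 : IntegrableOn g (Ioc 1 c) := hInt.mono_set (by rw [← hu]; exact subset_union_left)
    have h2 : IntegrableOn g (Ioi c) := hInt.mono_set (by rw [← hu]; exact subset_union_right)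
    have h3 := MeasureTheory.setIntegral_union (Ioc_disjoint_Ioi le_rfl)
      measurableSet_Ioi h1 h2
    rw [hu] at h3
    rw [hI1def, hGdef, h3]
    ring
  -- Phat agrees with explicit formula on Ioi 1
  have heq : ∀ θ ∈ Ioi (1:ℝ), Phat θ = θ * (I1 - G (q θ)) := by
    intro θ hθ
    rw [hPhat θ hθ, hsplit (q θ) (hq_mem θ hθ).le]
  -- derivative of Phat on Ioi 1
  have hD : ∀ θ ∈ Ioi (1:ℝ), deriv Phat θ =
      (I1 - G (q θ)) + θ * (-(g (q θ) * (1 / (n - 1) * θ ^ (1 / (n - 1) - 1)))) := by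
    intro θ0 hθ0
    have hθ0' : (1:ℝ) < θ0 := hθ0
    set c0 := q θ0 with hc0def
    have hc0 : 1 < c0 := hq_mem θ0 hθ0'
    -- derivative of q
    have hq' : HasDerivAt q (1 / (n - 1) * θ0 ^ (1 / (n - 1) - 1)) θ0 :=
      Real.hasDerivAt_rpow_const (Or.inl (by linarith))
    -- derivative of G at c0 : first for interval integral
    have hii : IntervalIntegrable g volume 1 c0 := by
      rw [intervalIntegrable_iff_integrableOn_Ioc_of_le hc0.le]
      exact hInt.mono_set Ioc_subset_Ioi_self
    have hmeas : StronglyMeasurableAtFilter g (𝓝 c0) volume :=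
      ContinuousOn.stronglyMeasurableAtFilter hIoi_open hcontg c0 hc0
    have hca : ContinuousAt g c0 := hcontg.continuousAt (Ioi_mem_nhds hc0)
    have hGi : HasDerivAt (fun u => ∫ x in (1:ℝ)..u, g x) (g c0) c0 :=
      intervalIntegral.integral_hasDerivAt_right hii hmeas hca
    have hGeq : G =ᶠ[𝓝 c0] fun u => ∫ x in (1:ℝ)..u, g x := by
      filter_upwards [Ioi_mem_nhds hc0] with u hu
      rw [hGdef]
      exact (intervalIntegral.integral_of_le (le_of_lt hu)).symm
    have hG' : HasDerivAt G (g c0) c0 := hGi.congr_of_eventuallyEq hGeq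
    have hcomp : HasDerivAt (fun θ => G (q θ))
        (g c0 * (1 / (n - 1) * θ0 ^ (1 / (n - 1) - 1))) θ0 := by
      exact HasDerivAt.comp θ0 hG' hq'
    have hform : HasDerivAt (fun θ => θ * (I1 - G (q θ)))
        (1 * (I1 - G (q θ0)) + θ0 * (0 - g c0 * (1 / (n - 1) * θ0 ^ (1 / (n - 1) - 1)))) θ0 :=
      (hasDerivAt_id θ0).mul ((hasDerivAt_const θ0 I1).sub hcomp)
    have hPeq : Phat =ᶠ[𝓝 θ0] fun θ => θ * (I1 - G (q θ)) := by
      filter_upwards [Ioi_mem_nhds hθ0'] with u hu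
      exact heq u hu
    have : HasDerivAt Phat
        (1 * (I1 - G (q θ0)) + θ0 * (0 - g c0 * (1 / (n - 1) * θ0 ^ (1 / (n - 1) - 1)))) θ0 :=
      hform.congr_of_eventuallyEq hPeq
    rw [this.deriv]
    ring
  -- q tends to 1 within Ioi 1
  have hq_tendsto : Tendsto q (𝓝[>] (1:ℝ)) (𝓝[>] 1) := by
    have h1 : Tendsto q (𝓝 1) (𝓝 1) := by
      have := (Real.continuousAt_rpow_const 1 (1 / (n - 1)) (Or.inl one_ne_zero)).tendsto
      simpa [hqdef, Real.one_rpow] using this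
    refine tendsto_nhdsWithin_of_tendsto_nhds_of_eventually_within _
      (h1.mono_left nhdsWithin_le_nhds) ?_
    filter_upwards [eventually_mem_nhdsWithin] with θ hθ
    exact hq_mem θ hθ
  -- G tends to 0 at 1⁺
  have hG_tendsto : Tendsto G (𝓝[>] (1:ℝ)) (𝓝 0) := by
    have hint2 : IntegrableOn g (Icc 1 2) := by
      rw [integrableOn_Icc_iff_integrableOn_Ioc]
      exact hInt.mono_set Ioc_subset_Ioi_self
    have hc := (intervalIntegral.continuousOn_primitive hint2) 1
      (left_mem_Icc.mpr (by norm_num))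
    have h0 : (∫ t in Ioc (1:ℝ) 1, g t) = 0 := by simp
    have hc2 : Tendsto G (𝓝[Icc (1:ℝ) 2] 1) (𝓝 0) := by
      have := hc.tendsto
      rw [h0] at this
      exact this
    have hle : 𝓝[>] (1:ℝ) ≤ 𝓝[Icc (1:ℝ) 2] 1 := by
      rw [← nhdsWithin_Ioc_eq_nhdsGT (by norm_num : (1:ℝ) < 2)]
      exact nhdsWithin_mono _ Ioc_subset_Icc_self
    exact hc2.mono_left hle
  -- g tends to W''/n at 1⁺
  have hg_tendsto : Tendsto g (𝓝[>] (1:ℝ)) (𝓝 (W'' / n)) := by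
    have hle : 𝓝[>] (1:ℝ) ≤ 𝓝[≠] (1:ℝ) :=
      nhdsWithin_mono _ (fun x hx => ne_of_gt hx)
    have h1 : Tendsto (slope (deriv W) 1) (𝓝[>] (1:ℝ)) (𝓝 W'') :=
      (hasDerivAt_iff_tendsto_slope.mp hW2).mono_left hle
    have hpow : HasDerivAt (fun x : ℝ => x ^ n) n 1 := by
      have := Real.hasDerivAt_rpow_const (x := 1) (p := n) (Or.inl one_ne_zero)
      simpa [Real.one_rpow] using this
    have h2 : Tendsto (slope (fun x : ℝ => x ^ n) 1) (𝓝[>] (1:ℝ)) (𝓝 n) :=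
      (hasDerivAt_iff_tendsto_slope.mp hpow).mono_left hle
    have h3 : Tendsto (fun c => slope (deriv W) 1 c / slope (fun x : ℝ => x ^ n) 1 c)
        (𝓝[>] (1:ℝ)) (𝓝 (W'' / n)) := h1.div h2 hn0
    refine h3.congr' ?_
    filter_upwards [eventually_mem_nhdsWithin] with c hc
    have hc1 : c - 1 ≠ 0 := sub_ne_zero.mpr (ne_of_gt hc)
    have hcn : c ^ n - 1 ≠ 0 := sub_ne_zero.mpr (ne_of_gt (hpow_gt c hc))
    rw [slope_def_field, slope_def_field, hW1, Real.one_rpow, hgdef]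
    field_simp
    ring

  -- assemble the limit of the derivative formula
  have htpow : Tendsto (fun θ : ℝ => θ ^ (1 / (n - 1) - 1)) (𝓝[>] (1:ℝ)) (𝓝 1) := by
    have := (Real.continuousAt_rpow_const 1 (1 / (n - 1) - 1) (Or.inl one_ne_zero)).tendsto
    rw [Real.one_rpow] at this
    exact this.mono_left nhdsWithin_le_nhds
  have hid : Tendsto (fun θ : ℝ => θ) (𝓝[>] (1:ℝ)) (𝓝 1) :=
    tendsto_id.mono_left nhdsWithin_le_nhds
  have hfinal : Tendsto
      (fun θ => (I1 - G (q θ)) + θ * (-(g (q θ) * (1 / (n - 1) * θ ^ (1 / (n - 1) - 1)))))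
      (𝓝[>] (1:ℝ))
      (𝓝 ((I1 - 0) + 1 * (-(W'' / n * (1 / (n - 1) * 1))))) := by
    exact ((tendsto_const_nhds.sub (hG_tendsto.comp hq_tendsto)).add
      (hid.mul (((hg_tendsto.comp hq_tendsto).mul
        (tendsto_const_nhds.mul htpow)).neg)))
  have hval : (I1 - 0) + 1 * (-(W'' / n * (1 / (n - 1) * 1))) = I1 - W'' / (n * (n - 1)) := by
    field_simp
    ring
  rw [hval] at hfinal
  refine hfinal.congr' ?_
  filter_upwards [eventually_mem_nhdsWithin] with θ hθ
  exact (hD θ hθ).symm
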